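/- Let G(T) be the threshold graph on {1,…,n} with construction sequence T and Laplacian matrix L, and let λ be a nonzero real number. Then every vector v ∈ ℝ^n with L·v = λ·v lies in the linear span of the set of vectors {C(i−1) : 2 ≤ i ≤ n, d(i) + [T(i) = 1] = λ}; in other words, the eigenspace of L for any nonzero eigenvalue λ is spanned by those vectors C(i−1) whose associated value d(i) + [T(i) = 1] equals λ. -/

import Mathlib

open Finset Matrix Polynomial

/-- The threshold graph on `Fin n` (vertex `i` of the paper corresponds to `⟨i-1, _⟩ : Fin n`)
with construction sequence `T` : two distinct vertices are adjacent iff the later one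
(in the construction order) was added by a join operation. -/
def thresholdGraph (n : ℕ) (T : Fin n → Bool) : SimpleGraph (Fin n) where
  Adj i j := i ≠ j ∧ T (max i j) = true
  symm := by
    constructor
    intro i j h
    exact ⟨h.1.symm, by rw [max_comm]; exact h.2⟩
  loopless := by
    constructor
    intro i h
    exact h.1 rfl

instance thresholdGraph.instDecidableRelAdj (n : ℕ) (T : Fin n → Bool) :
    DecidableRel (thresholdGraph n T).Adj :=
  fun i j => decidable_of_iff (i ≠ j ∧ T (max i j) = true) Iff.rfl

/-- `Cvec n k` is the vector `C(k) ∈ ℝ^n` of the paper: its first `k` entries equal `1`, its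
`(k+1)`-st entry equals `−k`, and its remaining entries equal `0` (0-indexed over `Fin n`). -/
def Cvec (n k : ℕ) : Fin n → ℝ := fun j =>
  if (j : ℕ) < k then 1 else if (j : ℕ) = k then -(k : ℝ) else 0

lemma sum_ite_lt_val (n m : ℕ) (hm : m ≤ n) (f : ℕ → ℝ) :
    ∑ l : Fin n, (if (l : ℕ) < m then f l else 0) = ∑ l ∈ Finset.range m, f l := by
  rw [Fin.sum_univ_eq_sum_range (fun i => if i < m then f i else 0) n, ← Finset.sum_filter]
  congr 1
  ext i
  simp only [Finset.mem_filter, Finset.mem_range]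
  omega

lemma sum_ite_lt_one (n m : ℕ) (hm : m ≤ n) :
    ∑ l : Fin n, (if (l : ℕ) < m then (1:ℝ) else 0) = m := by
  have := sum_ite_lt_val n m hm (fun _ => (1:ℝ))
  simpa using this

lemma sum_ite_eq_val (n : ℕ) (k : Fin n) (f : Fin n → ℝ) :
    ∑ l : Fin n, (if (l : ℕ) = (k : ℕ) then f l else 0) = f k := by
  rw [show (fun l : Fin n => if (l : ℕ) = (k : ℕ) then f l else 0)
      = fun l => if l = k then f l else 0 by funext l; simp [Fin.val_eq_val]]
  simp

section TG
variable (n : ℕ) (T : Fin n → Bool)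

lemma tg_adj_iff (j l : Fin n) :
    (thresholdGraph n T).Adj j l ↔ j ≠ l ∧ T (max j l) = true := Iff.rfl

/-- indicator decomposition of adjacency -/
lemma tg_adj_ite (j l : Fin n) :
    (if (thresholdGraph n T).Adj j l then (1:ℝ) else 0)
      = (if (l:ℕ) < (j:ℕ) ∧ T j = true then (1:ℝ) else 0)
      + (if (j:ℕ) < (l:ℕ) ∧ T l = true then (1:ℝ) else 0) := by
  rcases lt_trichotomy ((l:ℕ)) ((j:ℕ)) with h | h | h
  · have hmax : max j l = j := max_eq_left (by exact le_of_lt (by exact Fin.lt_def.mpr h))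
    have hne : j ≠ l := by intro e; subst e; omega
    rcases hT : T j with _ | _ <;>
      simp [thresholdGraph, hne, h, hT, hmax, not_lt_of_gt h]
  · have : j = l := Fin.ext h.symm
    subst this
    simp [thresholdGraph]
  · have hmax : max j l = l := max_eq_right (le_of_lt (Fin.lt_def.mpr h))
    have hne : j ≠ l := by intro e; subst e; omega
    rcases hT : T l with _ | _ <;>
      simp [thresholdGraph, hne, h, hT, hmax, not_lt_of_gt h]

/-- degree as a sum -/
lemma tg_degree_sum (j : Fin n) :
    ((thresholdGraph n T).degree j : ℝ) = ∑ l : Fin n, (if (thresholdGraph n T).Adj j l then (1:ℝ) else 0) := by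
  rw [Finset.sum_boole, SimpleGraph.degree, SimpleGraph.neighborFinset_eq_filter]

/-- F1 -/
lemma tg_degree_eq (j : Fin n) :
    ((thresholdGraph n T).degree j : ℝ)
      = (j:ℕ) * (if T j = true then 1 else 0)
        + ∑ l : Fin n, (if (j:ℕ) < (l:ℕ) ∧ T l = true then (1:ℝ) else 0) := by
  rw [tg_degree_sum]
  simp_rw [tg_adj_ite n T j]
  rw [Finset.sum_add_distrib]
  congr 1
  rcases hT : T j with _ | _
  · simp
  · simp only [and_true]
    rw [sum_ite_lt_one n (j:ℕ) (le_of_lt j.isLt)]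
    simp [hT]

end TG

section TG2
variable (n : ℕ) (T : Fin n → Bool)

lemma tg_adj_iff' (j l : Fin n) :
    (thresholdGraph n T).Adj j l ↔
      (((l:ℕ) < (j:ℕ)) ∧ T j = true) ∨ (((j:ℕ) < (l:ℕ)) ∧ T l = true) := by
  rcases lt_trichotomy ((l:ℕ)) ((j:ℕ)) with h | h | h
  · have hmax : max j l = j := max_eq_left (le_of_lt (Fin.lt_def.mpr h))
    have hne : j ≠ l := by intro e; subst e; omega
    simp [thresholdGraph, hne, h, hmax, not_lt_of_gt h]
  · have : j = l := Fin.ext h.symm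
    subst this
    simp [thresholdGraph]
  · have hmax : max j l = l := max_eq_right (le_of_lt (Fin.lt_def.mpr h))
    have hne : j ≠ l := by intro e; subst e; omega
    simp [thresholdGraph, hne, h, hmax, not_lt_of_gt h]

lemma sum_ite_lt_and (m : ℕ) (hm : m ≤ n) (b : Bool) :
    ∑ l : Fin n, (if (l:ℕ) < m ∧ b = true then (1:ℝ) else 0)
      = (if b = true then (1:ℝ) else 0) * m := by
  cases b
  · simp
  · simp only [and_true, if_true]
    rw [sum_ite_lt_one n m hm]
    simp

lemma sum_ite_eq_and (k : Fin n) (b : Bool) (x : ℝ) :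
    ∑ l : Fin n, (if (l:ℕ) = (k:ℕ) ∧ b = true then x else 0)
      = (if b = true then (1:ℝ) else 0) * x := by
  cases b
  · simp
  · simp only [and_true, if_true]
    rw [sum_ite_eq_val n k (fun _ => x)]
    simp

/-- sum of Cvec over neighbors of j, case j < k -/
lemma tg_nbr_sum_lt (k j : Fin n) (hjk : (j:ℕ) < (k:ℕ)) :
    ∑ l : Fin n, (if (thresholdGraph n T).Adj j l then Cvec n (k:ℕ) l else 0)
      = (if T j = true then (1:ℝ) else 0) * (j:ℕ)
        + (∑ l : Fin n, (if (j:ℕ) < (l:ℕ) ∧ (l:ℕ) < (k:ℕ) ∧ T l = true then (1:ℝ) else 0))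
        + (if T k = true then (1:ℝ) else 0) * (-(k:ℝ)) := by
  have hpt : ∀ l : Fin n,
      (if (thresholdGraph n T).Adj j l then Cvec n (k:ℕ) l else 0)
        = (if (l:ℕ) < (j:ℕ) ∧ T j = true then (1:ℝ) else 0)
          + (if (j:ℕ) < (l:ℕ) ∧ (l:ℕ) < (k:ℕ) ∧ T l = true then (1:ℝ) else 0)
          + (if (l:ℕ) = (k:ℕ) ∧ T k = true then (-(k:ℝ)) else 0) := by
    intro l
    by_cases hlk : (l:ℕ) = (k:ℕ)
    · have : l = k := Fin.ext hlk
      subst this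
      rcases hTl : T l with _ | _ <;> rcases hTj : T j with _ | _ <;>
        simp only [tg_adj_iff', Cvec, hTl, hTj, Bool.false_eq_true, and_false, false_and,
        and_true, true_and, if_false, or_false, false_or, if_true] <;>
        (try split_ifs) <;> first | rfl | ring1 | omega | (exfalso; omega)
    · rcases hTl : T l with _ | _ <;> rcases hTj : T j with _ | _ <;>
        rcases hTk : T k with _ | _ <;>
        simp only [tg_adj_iff', Cvec, hTl, hTj, hTk, Bool.false_eq_true, and_false, false_and,
        and_true, true_and, if_false, or_false, false_or, if_true] <;>
        (try split_ifs) <;> first | rfl | ring1 | omega | (exfalso; omega)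
  have h1 := Finset.sum_congr rfl (fun l (_ : l ∈ Finset.univ) => hpt l)
  rw [h1, Finset.sum_add_distrib, Finset.sum_add_distrib,
    sum_ite_lt_and n (j:ℕ) (le_of_lt j.isLt) (T j), sum_ite_eq_and n k (T k) (-(k:ℝ))]

lemma tg_N_split (k j : Fin n) (hjk : (j:ℕ) < (k:ℕ)) :
    ∑ l : Fin n, (if (j:ℕ) < (l:ℕ) ∧ T l = true then (1:ℝ) else 0)
      = (∑ l : Fin n, (if (j:ℕ) < (l:ℕ) ∧ (l:ℕ) < (k:ℕ) ∧ T l = true then (1:ℝ) else 0))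
        + (if T k = true then (1:ℝ) else 0)
        + ∑ l : Fin n, (if (k:ℕ) < (l:ℕ) ∧ T l = true then (1:ℝ) else 0) := by
  have hpt : ∀ l : Fin n,
      (if (j:ℕ) < (l:ℕ) ∧ T l = true then (1:ℝ) else 0)
        = (if (j:ℕ) < (l:ℕ) ∧ (l:ℕ) < (k:ℕ) ∧ T l = true then (1:ℝ) else 0)
          + (if (l:ℕ) = (k:ℕ) ∧ T k = true then (1:ℝ) else 0)
          + (if (k:ℕ) < (l:ℕ) ∧ T l = true then (1:ℝ) else 0) := by
    intro l
    by_cases hlk : (l:ℕ) = (k:ℕ)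
    · have : l = k := Fin.ext hlk
      subst this
      rcases hTl : T l with _ | _ <;>
        simp only [hTl, Bool.false_eq_true, and_false, false_and,
        and_true, true_and, if_false, or_false, false_or, if_true] <;>
        (try split_ifs) <;> first | rfl | ring1 | omega | (exfalso; omega)
    · rcases hTl : T l with _ | _ <;> rcases hTk : T k with _ | _ <;>
        simp only [hTl, hTk, Bool.false_eq_true, and_false, false_and,
        and_true, true_and, if_false, or_false, false_or, if_true] <;>
        (try split_ifs) <;> first | rfl | ring1 | omega | (exfalso; omega)
  have h1 := Finset.sum_congr rfl (fun l (_ : l ∈ Finset.univ) => hpt l)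
  rw [h1, Finset.sum_add_distrib, Finset.sum_add_distrib, sum_ite_eq_and n k (T k) 1]
  ring

end TG2

section TG3
variable (n : ℕ) (T : Fin n → Bool)

lemma tg_nbr_sum_eq (k : Fin n) :
    ∑ l : Fin n, (if (thresholdGraph n T).Adj k l then Cvec n (k:ℕ) l else 0)
      = (if T k = true then (1:ℝ) else 0) * (k:ℕ) := by
  have hpt : ∀ l : Fin n,
      (if (thresholdGraph n T).Adj k l then Cvec n (k:ℕ) l else 0)
        = (if (l:ℕ) < (k:ℕ) ∧ T k = true then (1:ℝ) else 0) := by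
    intro l
    rcases hTl : T l with _ | _ <;> rcases hTk : T k with _ | _ <;>
      simp only [tg_adj_iff', Cvec, hTl, hTk, Bool.false_eq_true, and_false, false_and,
        and_true, true_and, if_false, or_false, false_or, if_true] <;>
      (try split_ifs) <;> first | rfl | ring1 | omega | (exfalso; omega) |
        (rename_i h1 h2; exact absurd (Fin.ext (by omega) : l = k) (by rintro rfl; omega))
  have h1 := Finset.sum_congr rfl (fun l (_ : l ∈ Finset.univ) => hpt l)
  rw [h1, sum_ite_lt_and n (k:ℕ) (le_of_lt k.isLt) (T k)]

lemma tg_nbr_sum_gt (k j : Fin n) (hjk : (k:ℕ) < (j:ℕ)) :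
    ∑ l : Fin n, (if (thresholdGraph n T).Adj j l then Cvec n (k:ℕ) l else 0) = 0 := by
  have hpt : ∀ l : Fin n,
      (if (thresholdGraph n T).Adj j l then Cvec n (k:ℕ) l else 0)
        = (if (l:ℕ) < (k:ℕ) ∧ T j = true then (1:ℝ) else 0)
          + (if (l:ℕ) = (k:ℕ) ∧ T j = true then (-(k:ℝ)) else 0) := by
    intro l
    rcases hTl : T l with _ | _ <;> rcases hTj : T j with _ | _ <;>
      simp only [tg_adj_iff', Cvec, hTl, hTj, Bool.false_eq_true, and_false, false_and,
        and_true, true_and, if_false, or_false, false_or, if_true] <;>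
      (try split_ifs) <;> first | rfl | ring1 | omega | (exfalso; omega)
  have h1 := Finset.sum_congr rfl (fun l (_ : l ∈ Finset.univ) => hpt l)
  rw [h1, Finset.sum_add_distrib, sum_ite_lt_and n (k:ℕ) (le_of_lt k.isLt) (T j),
    sum_ite_eq_and n k (T j) (-(k:ℝ))]
  ring

/-- Lemma A: Cvec is an eigenvector -/
lemma tg_lap_Cvec (k : Fin n) :
    (thresholdGraph n T).lapMatrix ℝ *ᵥ Cvec n (k:ℕ)
      = (((thresholdGraph n T).degree k : ℝ) + (if T k = true then 1 else 0)) • Cvec n (k:ℕ) := by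
  funext j
  rw [SimpleGraph.lapMatrix_mulVec_apply, Pi.smul_apply, smul_eq_mul]
  have hnb : ∑ u ∈ (thresholdGraph n T).neighborFinset j, Cvec n (k:ℕ) u
      = ∑ l : Fin n, (if (thresholdGraph n T).Adj j l then Cvec n (k:ℕ) l else 0) := by
    rw [SimpleGraph.neighborFinset_eq_filter, Finset.sum_filter]
  rw [hnb]
  rcases lt_trichotomy ((j:ℕ)) ((k:ℕ)) with h | h | h
  · have hcj : Cvec n (k:ℕ) j = 1 := by simp [Cvec, h]
    rw [hcj, tg_nbr_sum_lt n T k j h]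
    have hF1j := tg_degree_eq n T j
    have hF1k := tg_degree_eq n T k
    have hNs := tg_N_split n T k j h
    linear_combination hF1j - hF1k + hNs
  · have hjkeq : j = k := Fin.ext h
    subst hjkeq
    have hcj : Cvec n (j:ℕ) j = -((j:ℕ):ℝ) := by simp [Cvec]
    rw [hcj, tg_nbr_sum_eq n T j]
    ring
  · have hcj : Cvec n (k:ℕ) j = 0 := by
      simp only [Cvec]
      rw [if_neg (by omega), if_neg (by omega)]
    rw [hcj, tg_nbr_sum_gt n T k j h]
    ring

end TG3

section Dots
variable (n : ℕ)

lemma Cvec_split (k : Fin n) (l : Fin n) :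
    Cvec n (k:ℕ) l = (if (l:ℕ) < (k:ℕ) then (1:ℝ) else 0)
      + (if (l:ℕ) = (k:ℕ) then -(((k:ℕ)):ℝ) else 0) := by
  simp only [Cvec]
  split_ifs <;> first | rfl | ring1 | omega | (exfalso; omega)

lemma sum_Cvec (k : Fin n) : ∑ j : Fin n, Cvec n (k:ℕ) j = 0 := by
  have h1 := Finset.sum_congr rfl (fun l (_ : l ∈ Finset.univ) => Cvec_split n k l)
  rw [h1, Finset.sum_add_distrib, sum_ite_lt_one n (k:ℕ) (le_of_lt k.isLt),
    sum_ite_eq_val n k (fun _ => -(((k:ℕ)):ℝ))]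
  ring

lemma dot_Cvec_self (k : Fin n) :
    Cvec n (k:ℕ) ⬝ᵥ Cvec n (k:ℕ) = ((k:ℕ):ℝ) + ((k:ℕ):ℝ)^2 := by
  have hpt : ∀ l : Fin n, Cvec n (k:ℕ) l * Cvec n (k:ℕ) l
      = (if (l:ℕ) < (k:ℕ) then (1:ℝ) else 0)
        + (if (l:ℕ) = (k:ℕ) then (((k:ℕ)):ℝ)^2 else 0) := by
    intro l
    simp only [Cvec]
    split_ifs <;> first | rfl | ring1 | omega | (exfalso; omega)
  show ∑ l : Fin n, Cvec n (k:ℕ) l * Cvec n (k:ℕ) l = _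
  have h1 := Finset.sum_congr rfl (fun l (_ : l ∈ Finset.univ) => hpt l)
  rw [h1, Finset.sum_add_distrib, sum_ite_lt_one n (k:ℕ) (le_of_lt k.isLt),
    sum_ite_eq_val n k (fun _ => (((k:ℕ)):ℝ)^2)]

lemma dot_Cvec_ne (k m : Fin n) (h : (k:ℕ) < (m:ℕ)) :
    Cvec n (k:ℕ) ⬝ᵥ Cvec n (m:ℕ) = 0 := by
  have hpt : ∀ l : Fin n, Cvec n (k:ℕ) l * Cvec n (m:ℕ) l
      = (if (l:ℕ) < (k:ℕ) then (1:ℝ) else 0)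
        + (if (l:ℕ) = (k:ℕ) then -(((k:ℕ)):ℝ) else 0) := by
    intro l
    simp only [Cvec]
    split_ifs <;> first | rfl | ring1 | omega | (exfalso; omega)
  show ∑ l : Fin n, Cvec n (k:ℕ) l * Cvec n (m:ℕ) l = _
  have h1 := Finset.sum_congr rfl (fun l (_ : l ∈ Finset.univ) => hpt l)
  rw [h1, Finset.sum_add_distrib, sum_ite_lt_one n (k:ℕ) (le_of_lt k.isLt),
    sum_ite_eq_val n k (fun _ => -(((k:ℕ)):ℝ))]
  ring

lemma Cvec_zero : Cvec n 0 = 0 := by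
  funext l
  simp [Cvec]

/-- a vector orthogonal to all Cvec's and with zero coordinate-sum is zero -/
lemma perp_zero (hn : 0 < n) (w : Fin n → ℝ)
    (h1 : ∀ k : Fin n, (k:ℕ) ≠ 0 → Cvec n (k:ℕ) ⬝ᵥ w = 0)
    (h2 : ∑ j : Fin n, w j = 0) : w = 0 := by
  set W : ℕ → ℝ := fun m => if h : m < n then w ⟨m, h⟩ else 0 with hW
  have hWval : ∀ l : Fin n, W (l:ℕ) = w l := by
    intro l
    simp only [hW, dif_pos l.isLt]
  have hdot : ∀ k : Fin n, Cvec n (k:ℕ) ⬝ᵥ w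
      = (∑ i ∈ Finset.range (k:ℕ), W i) - ((k:ℕ):ℝ) * W (k:ℕ) := by
    intro k
    have hpt : ∀ l : Fin n, Cvec n (k:ℕ) l * w l
        = (if (l:ℕ) < (k:ℕ) then W (l:ℕ) else 0)
          + (if (l:ℕ) = (k:ℕ) then -(((k:ℕ)):ℝ) * w l else 0) := by
      intro l
      rw [hWval]
      simp only [Cvec]
      split_ifs <;> first | rfl | ring1 | omega | (exfalso; omega)
    show ∑ l : Fin n, Cvec n (k:ℕ) l * w l = _
    have he := Finset.sum_congr rfl (fun l (_ : l ∈ Finset.univ) => hpt l)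
    rw [he, Finset.sum_add_distrib, sum_ite_lt_val n (k:ℕ) (le_of_lt k.isLt) W,
      sum_ite_eq_val n k (fun x => -(((k:ℕ)):ℝ) * w x), ← hWval k]
    ring
  have hsumW : ∑ i ∈ Finset.range n, W i = 0 := by
    rw [← Fin.sum_univ_eq_sum_range W n]
    rw [Finset.sum_congr rfl (fun l (_ : l ∈ Finset.univ) => hWval l)]
    exact h2
  have hS : ∀ k : ℕ, 1 ≤ k → k < n → ∑ i ∈ Finset.range k, W i = (k:ℝ) * W k := by
    intro k hk1 hkn
    have := h1 ⟨k, hkn⟩ (by simpa using Nat.one_le_iff_ne_zero.mp hk1)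
    rw [hdot ⟨k, hkn⟩] at this
    simp only at this
    linarith
  have key : ∀ k : ℕ, 1 ≤ k → k ≤ n → ∑ i ∈ Finset.range k, W i = (k:ℝ) * W 0 := by
    intro k
    induction k with
    | zero => omega
    | succ k ih =>
      intro _ hkn
      rcases Nat.eq_zero_or_pos k with hk0 | hkpos
      · subst hk0
        simp
      · have hkn' : k < n := by omega
        have hSk := hS k hkpos hkn'
        have hihk := ih hkpos (le_of_lt hkn')
        have hWk : W k = W 0 := by
          have hk0 : ((k:ℕ):ℝ) ≠ 0 := by
            exact_mod_cast Nat.pos_iff_ne_zero.mp hkpos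
          have : (k:ℝ) * W k = (k:ℝ) * W 0 := by rw [← hSk, hihk]
          exact mul_left_cancel₀ hk0 this
        rw [Finset.sum_range_succ, hihk, hWk]
        push_cast
        ring
  have hW0 : W 0 = 0 := by
    have := key n (by omega) le_rfl
    rw [hsumW] at this
    have hn0 : ((n:ℕ):ℝ) ≠ 0 := by exact_mod_cast Nat.pos_iff_ne_zero.mp hn
    rcases mul_eq_zero.mp this.symm with h | h
    · exact absurd h hn0
    · exact h
  have hWall : ∀ k : ℕ, k < n → W k = 0 := by
    intro k hkn
    rcases Nat.eq_zero_or_pos k with hk0 | hkpos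
    · subst hk0; exact hW0
    · have hSk := hS k hkpos hkn
      have hkey := key k hkpos (le_of_lt hkn)
      rw [hW0, mul_zero] at hkey
      rw [hkey] at hSk
      have hk0 : ((k:ℕ):ℝ) ≠ 0 := by exact_mod_cast Nat.pos_iff_ne_zero.mp hkpos
      have := hSk.symm
      rcases mul_eq_zero.mp this with h | h
      · exact absurd h hk0
      · exact h
  funext l
  have := hWall (l:ℕ) l.isLt
  rw [hWval] at this
  simpa using this

end Dots

lemma dot_sum' (n : ℕ) (u : Fin n → ℝ) (f : Fin n → (Fin n → ℝ)) :
    u ⬝ᵥ (∑ k : Fin n, f k) = ∑ k : Fin n, u ⬝ᵥ f k := by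
  simp only [dotProduct, Finset.sum_apply, Finset.mul_sum]
  exact Finset.sum_comm

/-- for any nonzero `λ`, every vector `v` with `L·v = λ·v` lies in the span of
the vectors `C(i−1)` (for paper vertices `2 ≤ i ≤ n`, i.e. `i : Fin n` with `(i : ℕ) ≠ 0`)
whose associated value `d(i) + [T(i) = 1]` equals `λ`. -/
theorem eigenspace_thresholdGraph_spanned_by_Cvec (n : ℕ) (T : Fin n → Bool) (hn : 0 < n)
    (hT1 : T ⟨0, hn⟩ = false) (lam : ℝ) (hlam : lam ≠ 0) (v : Fin n → ℝ)
    (hv : (thresholdGraph n T).lapMatrix ℝ *ᵥ v = lam • v) :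
    v ∈ Submodule.span ℝ {w : Fin n → ℝ | ∃ i : Fin n, (i : ℕ) ≠ 0 ∧
      ((thresholdGraph n T).degree i : ℝ) + (if T i = true then 1 else 0) = lam ∧
      w = Cvec n (i : ℕ)} := by
  classical
  set G := thresholdGraph n T with hG
  set L := G.lapMatrix ℝ with hL
  have hswap : ∀ u : Fin n → ℝ, u ⬝ᵥ (L *ᵥ v) = (L *ᵥ u) ⬝ᵥ v := by
    intro u
    rw [Matrix.dotProduct_mulVec, ← Matrix.mulVec_transpose,
      (SimpleGraph.isSymm_lapMatrix (G := G) (R := ℝ) : (G.lapMatrix ℝ)ᵀ = G.lapMatrix ℝ)]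
  have hμ : ∀ k : Fin n, L *ᵥ Cvec n (k:ℕ)
      = ((G.degree k : ℝ) + (if T k = true then 1 else 0)) • Cvec n (k:ℕ) :=
    tg_lap_Cvec n T
  have hsumv : ∑ j : Fin n, v j = 0 := by
    have h1 : (fun _ : Fin n => (1:ℝ)) ⬝ᵥ (L *ᵥ v) = 0 := by
      rw [hswap, SimpleGraph.lapMatrix_mulVec_const_eq_zero, zero_dotProduct]
    rw [hv, dotProduct_smul, smul_eq_mul] at h1
    rcases mul_eq_zero.mp h1 with h | h
    · exact absurd h hlam
    · simpa [dotProduct] using h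
  have horth : ∀ k : Fin n,
      (((G.degree k : ℝ) + (if T k = true then 1 else 0)) - lam) * (Cvec n (k:ℕ) ⬝ᵥ v) = 0 := by
    intro k
    have e1 : Cvec n (k:ℕ) ⬝ᵥ (L *ᵥ v) = lam * (Cvec n (k:ℕ) ⬝ᵥ v) := by
      rw [hv, dotProduct_smul, smul_eq_mul]
    have e2 : Cvec n (k:ℕ) ⬝ᵥ (L *ᵥ v)
        = ((G.degree k : ℝ) + (if T k = true then 1 else 0)) * (Cvec n (k:ℕ) ⬝ᵥ v) := by
      rw [hswap, hμ k, smul_dotProduct, smul_eq_mul]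
    rw [sub_mul, ← e1, ← e2, sub_self]
  set a : Fin n → ℝ := fun k => (Cvec n (k:ℕ) ⬝ᵥ v) / (((k:ℕ):ℝ) + ((k:ℕ):ℝ)^2) with ha
  have hdenom : ∀ k : Fin n, (k:ℕ) ≠ 0 → ((k:ℕ):ℝ) + ((k:ℕ):ℝ)^2 ≠ 0 := by
    intro k hk
    have hpos : (0:ℝ) < ((k:ℕ):ℝ) := by exact_mod_cast Nat.pos_of_ne_zero hk
    positivity
  have hdotsum : ∀ m : Fin n,
      Cvec n (m:ℕ) ⬝ᵥ (∑ k : Fin n, a k • Cvec n (k:ℕ))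
        = a m * (((m:ℕ):ℝ) + ((m:ℕ):ℝ)^2) := by
    intro m
    rw [dot_sum' n]
    rw [Finset.sum_eq_single m]
    · rw [dotProduct_smul, smul_eq_mul, dot_Cvec_self]
    · intro k _ hkm
      rw [dotProduct_smul, smul_eq_mul]
      have hne : (k:ℕ) ≠ (m:ℕ) := fun h => hkm (Fin.ext h)
      rcases lt_or_gt_of_ne hne with h | h
      · rw [dotProduct_comm, dot_Cvec_ne n k m h, mul_zero]
      · rw [dot_Cvec_ne n m k h, mul_zero]
    · intro h
      exact absurd (Finset.mem_univ m) h
  have hdecomp : v = ∑ k : Fin n, a k • Cvec n (k:ℕ) := by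
    have hw := perp_zero n hn (v - ∑ k : Fin n, a k • Cvec n (k:ℕ)) ?_ ?_
    · exact (sub_eq_zero.mp hw)
    · intro m hm
      rw [dotProduct_sub, hdotsum m, ha]
      simp only []
      rw [div_mul_cancel₀ _ (hdenom m hm), sub_self]
    · simp only [Pi.sub_apply]
      rw [Finset.sum_sub_distrib, hsumv]
      have : ∑ j : Fin n, (∑ k : Fin n, a k • Cvec n (k:ℕ)) j
          = ∑ k : Fin n, a k * (∑ j : Fin n, Cvec n (k:ℕ) j) := by
        simp only [Finset.sum_apply, Pi.smul_apply, smul_eq_mul, Finset.mul_sum]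
        exact Finset.sum_comm
      rw [this]
      have hz : ∀ k : Fin n, a k * (∑ j : Fin n, Cvec n (k:ℕ) j) = 0 := by
        intro k
        rw [sum_Cvec n k, mul_zero]
      rw [Finset.sum_congr rfl (fun k _ => hz k), Finset.sum_const_zero]
      ring
  rw [hdecomp]
  apply Submodule.sum_mem
  intro k _
  by_cases hak : a k = 0
  · rw [hak, zero_smul]
    exact Submodule.zero_mem _
  · have hdotne : Cvec n (k:ℕ) ⬝ᵥ v ≠ 0 := by
      intro h0
      exact hak (by rw [ha]; simp only []; rw [h0, zero_div])
    have hk0 : (k:ℕ) ≠ 0 := by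
      intro h0
      apply hdotne
      have hc : Cvec n (k:ℕ) = 0 := by rw [h0]; exact Cvec_zero n
      rw [hc, zero_dotProduct]
    have hμk : ((thresholdGraph n T).degree k : ℝ) + (if T k = true then 1 else 0) = lam := by
      rcases mul_eq_zero.mp (horth k) with h | h
      · exact sub_eq_zero.mp h
      · exact absurd h hdotne
    exact Submodule.smul_mem _ _ (Submodule.subset_span ⟨k, hk0, hμk, rfl⟩)
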